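/- Let p be a prime and q = p^a for some positive integer a, and define W'(q) as the set of all sums y_0 + y_1 + ⋯ + y_{⌊q/2⌋} over tuples (y_0, …, y_{⌊q/2⌋}) of natural numbers satisfying Σ_{i=0}^{⌊q/2⌋} y_i·(ζ_q^i + ζ_q^{q−i}) = −1, where ζ_q = e^{2πi/q}. Then W'(q) = ∅ if p = 2, and W'(q) = { (−1 + (1 + 2x)·p)/2 : x ∈ ℕ } if p is odd. -/

import Mathlib

open Finset Polynomial

/-- The `t`-th power graph: vertices are adjacent when they are distinct and at
graph (geodesic) distance at most `t` in `G`. -/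
def powerGraph {V : Type*} (G : SimpleGraph V) (t : ℕ) : SimpleGraph V where
  Adj u v := u ≠ v ∧ G.Reachable u v ∧ G.dist u v ≤ t
  symm := by
    constructor
    rintro u v ⟨h1, h2, h3⟩
    exact ⟨h1.symm, h2.symm, by rwa [SimpleGraph.dist_comm]⟩
  loopless := ⟨fun v h => h.1 rfl⟩

/-- The distance-`t` chromatic number of a graph. -/
noncomputable def distChromaticNumber {V : Type*} (G : SimpleGraph V) (t : ℕ) : ℕ∞ :=
  (powerGraph G t).chromaticNumber

/-- `x` is an eigenvalue of the (real) adjacency matrix of `G`. -/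
def IsAdjEigenvalue {V : Type*} [Fintype V] [DecidableEq V] (G : SimpleGraph V)
    [DecidableRel G.Adj] (x : ℝ) : Prop :=
  ∃ v : V → ℝ, v ≠ 0 ∧ (SimpleGraph.adjMatrix ℝ G).mulVec v = x • v

/-- The hypercube graph `Q_n`. -/
def hypercube (n : ℕ) : SimpleGraph (Fin n → Fin 2) where
  Adj u v := hammingDist u v = 1
  symm := ⟨fun u v h => by (try simp only at h ⊢); rwa [hammingDist_comm]⟩
  loopless := ⟨fun u h => by simp only [hammingDist_self] at h; exact absurd h (by norm_num)⟩

noncomputable instance (n : ℕ) : DecidableRel (hypercube n).Adj :=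
  fun _ _ => Classical.dec _

/-- The Lee graph `G(n,q)`: the `n`-fold Cartesian product of the `q`-cycle. -/
def leeGraph (n q : ℕ) : SimpleGraph (Fin n → ZMod q) where
  Adj u v := u ≠ v ∧ ∃ i, (u i = v i + 1 ∨ v i = u i + 1) ∧ ∀ j, j ≠ i → u j = v j
  symm := by
    constructor
    rintro u v ⟨hne, i, h, hj⟩
    exact ⟨hne.symm, i, h.symm, fun j hji => (hj j hji).symm⟩
  loopless := ⟨fun u h => h.1 rfl⟩

noncomputable instance (n q : ℕ) : DecidableRel (leeGraph n q).Adj :=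
  fun _ _ => Classical.dec _

/-- The Lee distance on `(ℤ/qℤ)^n`. -/
def leeDist {n q : ℕ} (b c : Fin n → ZMod q) : ℕ :=
  ∑ i, min ((b i - c i).val) (q - (b i - c i).val)

/-- The primitive `q`-th root of unity `ζ_q = e^{2πi/q}`. -/
noncomputable def zetaC (q : ℕ) : ℂ := Complex.exp (2 * Real.pi * Complex.I / q)

/-- `W'(q)`: the set of sums `y₀ + ⋯ + y_{⌊q/2⌋}` over tuples of naturals with
`∑ y_i (ζ_q^i + ζ_q^{q−i}) = −1`. -/
def WPrime (q : ℕ) : Set ℕ :=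
  {m | ∃ y : Fin (q / 2 + 1) → ℕ,
    (∑ i, (y i : ℂ) * (zetaC q ^ (i : ℕ) + zetaC q ^ (q - (i : ℕ)))) = -1 ∧
    (∑ i, y i) = m}

lemma sum_reindex {M : Type*} [AddCommMonoid M] (n r k : ℕ) (hr : 0 < r)
    (hk : k * r < n) (hk2 : n ≤ (k+1) * r) (F : ℕ → M) (hF : ∀ i, ¬ r ∣ i → F i = 0) :
    ∑ i ∈ range n, F i = ∑ j ∈ range (k+1), F (j*r) := by
  have hsub : (range (k+1)).image (· * r) ⊆ range n := by
    intro i hi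
    simp only [mem_image, mem_range] at hi
    obtain ⟨j, hj, rfl⟩ := hi
    have : j * r ≤ k * r := Nat.mul_le_mul_right r (by omega)
    exact mem_range.mpr (by omega)
  rw [← Finset.sum_subset hsub, Finset.sum_image]
  · intro a _ b _ h
    exact Nat.eq_of_mul_eq_mul_right hr h
  · intro i hi hni
    apply hF
    intro ⟨j, hj⟩
    subst hj
    apply hni
    simp only [mem_image, mem_range]
    refine ⟨j, ?_, (mul_comm j r)⟩
    simp only [mem_range] at hi
    by_contra hc
    have : (k+1) * r ≤ j * r := Nat.mul_le_mul_right r (by omega)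
    have : r * j = j * r := mul_comm r j
    omega

lemma backward_dir (p a : ℕ) (hp : p.Prime) (ha : 1 ≤ a) (hodd : Odd p) (m x : ℕ)
    (hmx : 2*m+1 = (1+2*x)*p) : m ∈ WPrime (p^a) := by
  obtain ⟨t, ht⟩ := hodd
  have hp3 : 3 ≤ p := by
    have h2 := hp.two_le
    omega
  set k := t with hk
  have hpk : p = 2*k + 1 := by omega
  set r := p ^ (a-1) with hrdef
  set q := p ^ a with hqdef
  have hr : 0 < r := pow_pos hp.pos _
  have hq : q = r * p := by
    rw [hqdef, hrdef, ← pow_succ]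
    congr 1
    omega
  have hqr : q = 2*(k*r) + r := by rw [hq, hpk]; ring
  have hq0 : q ≠ 0 := by omega
  have hqpos : 0 < q := by omega
  have hk1 : k * r < q/2 + 1 := by omega
  have hk2 : q/2 + 1 ≤ (k+1) * r := by
    have : (k+1)*r = k*r + r := by ring
    omega
  set y' : ℕ → ℕ := fun i => if r ∣ i then (if i = 0 then x else 1+2*x) else 0 with hy'
  have hζ : IsPrimitiveRoot (zetaC q) q := Complex.isPrimitiveRoot_exp q hq0
  set ζ := zetaC q with hζdef
  set ω := ζ ^ r with hω
  have hωprim : IsPrimitiveRoot ω p := hζ.pow hqpos hq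
  have hωsum : ∑ j ∈ range (p-1), ω ^ (j+1) = -1 := by
    have h0 : ∑ j ∈ range p, ω ^ j = 0 := hωprim.geom_sum_eq_zero (by omega)
    have := Finset.sum_range_succ' (fun j => ω ^ j) (p-1)
    have hp1 : p - 1 + 1 = p := by omega
    rw [hp1, h0, pow_zero] at this
    exact eq_neg_of_add_eq_zero_left this.symm
  refine ⟨fun i => y' i.val, ?_, ?_⟩
  · -- complex sum
    set F : ℕ → ℂ := fun i => (y' i : ℂ) * (ζ^i + ζ^(q-i)) with hFdef
    have hrest : ∑ i ∈ range (q/2+1), F i = -1 := by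
      rw [sum_reindex (q/2+1) r k hr hk1 hk2 F
            (fun i h => by simp [hFdef, hy', h]),
          Finset.sum_range_succ']
      have hF0 : F (0*r) = 2*(x:ℂ) := by
        simp [hFdef, hy', hζ.pow_eq_one]
        ring
      have hFj : ∀ j ∈ range k, F ((j+1)*r) = (1+2*(x:ℂ)) * (ω^(j+1) + ω^(p-1-j)) := by
        intro j hj
        rw [mem_range] at hj
        have hne : (j+1)*r ≠ 0 := by positivity
        have hdvd : r ∣ (j+1)*r := Dvd.intro (j+1) (mul_comm r (j+1))
        have e1 : ζ^((j+1)*r) = ω^(j+1) := by rw [hω, ← pow_mul, Nat.mul_comm]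
        have e2 : ζ^(q - (j+1)*r) = ω^(p-1-j) := by
          have he : q - (j+1)*r = r * (p-1-j) := by
            have hadd : r*(p-1-j) + (j+1)*r = q := by
              rw [hq, mul_comm (j+1) r, ← mul_add]
              congr 1
              omega
            omega
          rw [he, pow_mul, ← hω]
        rw [hFdef]
        simp only [hy', hdvd, hne, if_true, if_neg hne, ite_true]
        rw [e1, e2]
        push_cast
        ring
      rw [Finset.sum_congr rfl hFj, hF0, ← Finset.mul_sum]
      have hS : ∑ j ∈ range k, (ω^(j+1) + ω^(p-1-j)) = -1 := by
        rw [Finset.sum_add_distrib]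
        have hB : ∑ j ∈ range k, ω^(p-1-j) = ∑ j ∈ range k, ω^(k+1+j) := by
          rw [← Finset.sum_range_reflect (fun j => ω^(k+1+j)) k]
          apply Finset.sum_congr rfl
          intro j hj
          rw [mem_range] at hj
          congr 1
          omega
        rw [hB]
        have hA : ∑ j ∈ range k, ω^(j+1) + ∑ j ∈ range k, ω^(k+1+j)
            = ∑ j ∈ range (k+k), ω^(j+1) := by
          rw [Finset.sum_range_add (fun j => ω^(j+1)) k k]
          congr 1
          apply Finset.sum_congr rfl
          intro j _
          congr 1
          omega
        rw [hA, show k + k = p - 1 by omega, hωsum]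
      rw [hS]
      ring
    exact (Fin.sum_univ_eq_sum_range F (q/2+1)).trans hrest
  · -- nat sum
    rw [Fin.sum_univ_eq_sum_range (fun i => y' i) (q/2+1),
        sum_reindex (q/2+1) r k hr hk1 hk2 y' (fun i h => by simp [hy', h]),
        Finset.sum_range_succ']
    have h0 : y' (0 * r) = x := by simp [hy']
    have h1 : ∀ j ∈ range k, y' ((j+1)*r) = 1 + 2*x := by
      intro j _
      have hne : (j+1)*r ≠ 0 := by positivity
      simp [hy', hne, Dvd.intro (j+1) (mul_comm r (j+1))]
    rw [h0, Finset.sum_congr rfl h1, Finset.sum_const, smul_eq_mul, Finset.card_range]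
    have : (1+2*x)*p = 2*(k*(1+2*x)) + (1+2*x) := by rw [hpk]; ring
    omega

lemma forward_dir (p a : ℕ) (hp : p.Prime) (ha : 1 ≤ a) (m : ℕ)
    (hm : m ∈ WPrime (p ^ a)) : ∃ d : ℤ, 0 < d ∧ Odd d ∧ (2*m+1 : ℤ) = p * d := by
  set q := p ^ a with hqdef
  obtain ⟨y, h1, h2⟩ := hm
  have hq0 : q ≠ 0 := pow_ne_zero a hp.pos.ne'
  have hqpos : 0 < q := Nat.pos_of_ne_zero hq0
  have hζ : IsPrimitiveRoot (zetaC q) q := Complex.isPrimitiveRoot_exp q hq0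
  set f : ℤ[X] :=
    (∑ i : Fin (q/2+1), C ((y i : ℤ)) * (X^(i:ℕ) + X^(q-(i:ℕ)))) + 1 with hfdef
  have hev : aeval (zetaC q) f = 0 := by
    simp only [hfdef, map_add, map_sum, map_mul, map_pow, aeval_C, aeval_X, map_one,
      eq_intCast, Int.cast_natCast, map_natCast, map_intCast]
    rw [h1]
    ring
  have hdvd : cyclotomic q ℤ ∣ f := by
    rw [cyclotomic_eq_minpoly hζ hqpos]
    exact minpoly.isIntegrallyClosed_dvd (hζ.isIntegral hqpos) hev
  obtain ⟨g, hg⟩ := hdvd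
  have heval : f.eval 1 = (cyclotomic q ℤ).eval 1 * g.eval 1 := by rw [hg, eval_mul]
  have hcyc : (cyclotomic q ℤ).eval 1 = p := by
    haveI : Fact p.Prime := ⟨hp⟩
    obtain ⟨b, rfl⟩ : ∃ b, a = b + 1 := ⟨a - 1, by omega⟩
    exact eval_one_cyclotomic_prime_pow b
  have hf1 : f.eval 1 = 2 * m + 1 := by
    simp only [hfdef, eval_add, eval_finset_sum, eval_mul, eval_C, eval_pow, eval_X,
      one_pow, eval_one, mul_one]
    have : ∑ i : Fin (q/2+1), ((y i : ℤ) * (1 + 1)) = 2 * (m : ℤ) := by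
      rw [← h2]; push_cast [Finset.mul_sum]; apply Finset.sum_congr rfl; intros; ring
    rw [← this]
  refine ⟨g.eval 1, ?_, ?_, by rw [← hcyc, ← heval, hf1]⟩
  · by_contra hc
    push_neg at hc
    have h1' : (2*m+1 : ℤ) = p * g.eval 1 := by rw [← hcyc, ← heval, hf1]
    have : (p : ℤ) * g.eval 1 ≤ 0 := mul_nonpos_of_nonneg_of_nonpos (by positivity) hc
    omega
  · have h1' : (2*m+1 : ℤ) = p * g.eval 1 := by rw [← hcyc, ← heval, hf1]
    have hodd : Odd ((p:ℤ) * g.eval 1) := by rw [← h1']; exact ⟨m, by ring⟩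
    exact (Int.odd_mul.mp hodd).2


/-- for a prime power `q = p^a`, `W'(q) = ∅` if `p = 2` and
`W'(q) = {(−1 + (1+2x)p)/2 : x ∈ ℕ}` (i.e. `{m : 2m + 1 = (1+2x)p}`) if `p` is odd. -/
theorem stmt14 (p a : ℕ) (hp : p.Prime) (ha : 1 ≤ a) :
    (p = 2 → WPrime (p ^ a) = ∅) ∧
    (Odd p → WPrime (p ^ a) = {m : ℕ | ∃ x : ℕ, 2 * m + 1 = (1 + 2 * x) * p}) := by
  constructor
  · rintro rfl
    ext m
    simp only [Set.mem_empty_iff_false, iff_false]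
    intro hm
    obtain ⟨d, hd0, hdodd, hdeq⟩ := forward_dir 2 a hp ha m hm
    obtain ⟨e, he⟩ := hdodd
    push_cast at hdeq
    omega
  · intro hoddp
    ext m
    simp only [Set.mem_setOf_eq]
    constructor
    · intro hm
      obtain ⟨d, hd0, ⟨e, he⟩, hdeq⟩ := forward_dir p a hp ha m hm
      refine ⟨e.toNat, ?_⟩
      have he0 : (0:ℤ) ≤ e := by omega
      have hcast : ((2*m+1 : ℕ) : ℤ) = (((1+2*e.toNat)*p : ℕ) : ℤ) := by
        push_cast
        rw [Int.toNat_of_nonneg he0, hdeq, he]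
        ring
      exact_mod_cast hcast
    · rintro ⟨x, hx⟩
      exact backward_dir p a hp ha hoddp m x hx
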